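/- For the class ℒ of all linear orders with at most 2 elements, the relation ⊴^ℒ is not transitive: with ζ = (ℤ, ≤), one has ζ·3 ⊴^ℒ ζ + 1 + ζ·2 and ζ + 1 + ζ·2 ⊴^ℒ (ζ + 1)·3, but ζ·3 is not ⊴^ℒ-below (ζ + 1)·3. -/

import Mathlib

universe u v w x

/-- A `K`-convex partition of `L`: a partition of `L` into nonempty pieces indexed by `K`
such that `k < k'` iff every element of `P k` is below every element of `P k'`. -/
def IsConvexPartition {K : Type u} {L : Type v} [LinearOrder K] [LinearOrder L]
    (P : K → Set L) : Prop :=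
  (∀ k, (P k).Nonempty) ∧ (∀ y : L, ∃! k, y ∈ P k) ∧
    ∀ k k' : K, k < k' ↔ ∀ a ∈ P k, ∀ b ∈ P k', a < b

/-- `ℒ`-convex embeddability: `L ⊴^ℒ L'` iff there are `K ∈ ℒ`, a `K`-convex partition of `L`,
and an order embedding of `L` into `L'` mapping each piece onto a convex set. -/
def LCE (ℒ : Set LinOrd.{u}) (L : Type v) (L' : Type w)
    [LinearOrder L] [LinearOrder L'] : Prop :=
  ∃ K ∈ ℒ, ∃ P : ↥K → Set L, IsConvexPartition P ∧
    ∃ f : L ↪o L', ∀ k : ↥K, (⇑f '' P k).OrdConnected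

open Set

def toF (k : ↥(LinOrd.of (Fin 2))) : Fin 2 := k

@[simp] lemma ofLex_mk {α : Type*} {β : Type*} (a : α) (b : β) :
    ofLex ((a, b) : α ×ₗ β) = (a, b) := rfl

def f1 : Fin 3 ×ₗ ℤ → ℤ ⊕ₗ PUnit ⊕ₗ (Fin 2 ×ₗ ℤ) := fun x =>
  if (ofLex x).1 = 0 then toLex (Sum.inl (ofLex x).2)
  else toLex (Sum.inr (toLex (Sum.inr (toLex
    (if (ofLex x).1 = 1 then (0 : Fin 2) else 1, (ofLex x).2)))))

lemma f1_mono : StrictMono f1 := by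
  intro x y h
  obtain ⟨i, z⟩ := x
  obtain ⟨j, w⟩ := y
  replace h : i < j ∨ i = j ∧ z < w := Prod.Lex.toLex_lt_toLex.mp h
  fin_cases i <;> fin_cases j <;>
    simp_all [f1, Prod.Lex.toLex_lt_toLex, Sum.Lex.inl_lt_inl_iff, Sum.Lex.inl_lt_inr,
      Sum.Lex.inr_lt_inr_iff] <;> omega

def P1 : ↥(LinOrd.of (Fin 2)) → Set (Fin 3 ×ₗ ℤ) :=
  fun k => {x | ((ofLex x).1 = 0) ↔ (toF k = 0)}

lemma P1_partition : IsConvexPartition P1 := by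
  refine ⟨?_, ?_, ?_⟩
  · intro k
    rcases (by omega : toF k = 0 ∨ toF k = 1) with h | h
    · exact ⟨toLex (0, 0), by simp [P1, h]⟩
    · exact ⟨toLex (1, 0), by simp [P1, h]⟩
  · intro y
    by_cases hy : (ofLex y).1 = 0
    · refine ⟨(0 : Fin 2), by simp [P1, toF, hy], ?_⟩
      intro k hk
      have : toF k = 0 := by simpa [P1, hy] using hk
      exact this
    · refine ⟨(1 : Fin 2), by simp [P1, toF, hy], ?_⟩
      intro k hk
      simp only [P1, Set.mem_setOf_eq, hy, false_iff] at hk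
      have : toF k = 1 := by omega
      exact this
  · intro k k'
    show toF k < toF k' ↔ _
    constructor
    · intro h a ha b hb
      have h0 : toF k = 0 := by omega
      have h1 : toF k' = 1 := by omega
      simp only [P1, Set.mem_setOf_eq, h0, h1] at ha hb
      obtain ⟨i, z⟩ := a
      obtain ⟨j, w⟩ := b
      simp only [ofLex_mk] at ha hb
      refine Prod.Lex.toLex_lt_toLex.mpr ?_
      left
      simp only [ofLex_mk]
      simp only [iff_true] at ha
      have : j ≠ 0 := by simpa using hb
      rw [ha]
      exact Fin.pos_of_ne_zero this
    · intro h
      by_contra hlt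
      have h01 : toF k' ≤ toF k := not_lt.mp hlt
      rcases (by omega : toF k = 0 ∨ toF k = 1) with h0 | h0
      · have h0' : toF k' = 0 := by omega
        have := h (toLex (0,0)) (by simp [P1, h0]) (toLex (0,0)) (by simp [P1, h0'])
        exact lt_irrefl _ this
      · rcases (by omega : toF k' = 0 ∨ toF k' = 1) with h1 | h1
        · have := h (toLex (1,0)) (by simp [P1, h0]) (toLex (0,0)) (by simp [P1, h1])
          rw [Prod.Lex.toLex_lt_toLex] at this
          simp at this
        · have := h (toLex (1,0)) (by simp [P1, h0]) (toLex (1,0)) (by simp [P1, h1])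
          exact lt_irrefl _ this

lemma f1_img (k : ↥(LinOrd.of (Fin 2))) : (f1 '' P1 k).OrdConnected := by
  rcases (by omega : toF k = 0 ∨ toF k = 1) with h | h
  · have himg : f1 '' P1 k = {t | ∃ z : ℤ, t = toLex (Sum.inl z)} := by
      ext t
      constructor
      · rintro ⟨x, hx, rfl⟩
        obtain ⟨i, z⟩ := x
        simp only [P1, Set.mem_setOf_eq, ofLex_mk, h, iff_true] at hx
        exact ⟨z, by have hx' : i = 0 := hx; simp [f1, hx']⟩
      · rintro ⟨z, rfl⟩
        exact ⟨toLex (0, z), by simp [P1, h], by simp [f1]⟩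
    rw [himg]
    constructor
    rintro a ⟨za, rfl⟩ b ⟨zb, rfl⟩ c ⟨hac, hcb⟩
    rcases c with zc | c'
    · exact ⟨zc, rfl⟩
    · exact absurd hcb Sum.Lex.not_inr_le_inl
  · have himg : f1 '' P1 k = {t | ∃ p : Fin 2 ×ₗ ℤ, t = toLex (Sum.inr (toLex (Sum.inr p)))} := by
      ext t
      constructor
      · rintro ⟨x, hx, rfl⟩
        obtain ⟨i, z⟩ := x
        simp only [P1, Set.mem_setOf_eq, ofLex_mk, h] at hx
        have hi : i ≠ 0 := by
          intro h0; rw [h0] at hx; exact absurd (hx.mp rfl) (by decide)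
        exact ⟨toLex (if i = 1 then (0:Fin 2) else 1, z), by simp [f1, hi]; split_ifs <;> simp_all⟩
      · rintro ⟨p, rfl⟩
        obtain ⟨b, z⟩ := p
        fin_cases b
        · exact ⟨toLex (1, z), by simp [P1, h], by simp [f1]; rfl⟩
        · exact ⟨toLex (2, z), by simp [P1, h], by simp [f1]; rfl⟩
    rw [himg]
    constructor
    rintro a ⟨pa, rfl⟩ b ⟨pb, rfl⟩ c ⟨hac, hcb⟩
    rcases c with zc | c'
    · exact absurd hac Sum.Lex.not_inr_le_inl
    · have hac' : toLex (Sum.inr pa : PUnit ⊕ₗ (Fin 2 ×ₗ ℤ)) ≤ c' := by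
        exact Sum.Lex.inr_le_inr_iff.mp hac
      rcases c' with u | p'
      · exact absurd hac' Sum.Lex.not_inr_le_inl
      · exact ⟨p', rfl⟩

def c2 : ℤ ⊕ₗ PUnit ⊕ₗ (Fin 2 ×ₗ ℤ) → Fin 2
  | Sum.inl _ => 0
  | Sum.inr (Sum.inl _) => 0
  | Sum.inr (Sum.inr p) => (ofLex p).1

def f2 : ℤ ⊕ₗ PUnit ⊕ₗ (Fin 2 ×ₗ ℤ) → Fin 3 ×ₗ (ℤ ⊕ₗ PUnit)
  | Sum.inl z => toLex (0, toLex (Sum.inl z))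
  | Sum.inr (Sum.inl _) => toLex (0, toLex (Sum.inr PUnit.unit))
  | Sum.inr (Sum.inr p) => toLex ((ofLex p).1.succ, toLex (Sum.inl (ofLex p).2))

lemma f2_mono : StrictMono f2 := by
  rintro (z | (u | p)) (w | (v | q)) h
  · have hz : z < w := Sum.Lex.inl_lt_inl_iff.mp h
    exact Prod.Lex.toLex_lt_toLex.mpr (.inr ⟨rfl, Sum.Lex.inl_lt_inl_iff.mpr hz⟩)
  · exact Prod.Lex.toLex_lt_toLex.mpr (.inr ⟨rfl, Sum.Lex.inl_lt_inr _ _⟩)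
  · exact Prod.Lex.toLex_lt_toLex.mpr (.inl (Fin.succ_pos _))
  · exact absurd h Sum.Lex.not_inr_lt_inl
  · exact absurd (Sum.Lex.inl_lt_inl_iff.mp (Sum.Lex.inr_lt_inr_iff.mp h))
      (fun hh => lt_irrefl u (by cases u; cases v; exact hh))
  · exact Prod.Lex.toLex_lt_toLex.mpr (.inl (Fin.succ_pos _))
  · exact absurd h Sum.Lex.not_inr_lt_inl
  · exact absurd (Sum.Lex.inr_lt_inr_iff.mp h) Sum.Lex.not_inr_lt_inl
  · have hpq : p < q := Sum.Lex.inr_lt_inr_iff.mp (Sum.Lex.inr_lt_inr_iff.mp h)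
    rcases Prod.Lex.toLex_lt_toLex.mp hpq with h1 | ⟨h1, h2⟩
    · exact Prod.Lex.toLex_lt_toLex.mpr (.inl (Fin.succ_lt_succ_iff.mpr h1))
    · exact Prod.Lex.toLex_lt_toLex.mpr (.inr ⟨congrArg Fin.succ h1, Sum.Lex.inl_lt_inl_iff.mpr h2⟩)

def P2 : ↥(LinOrd.of (Fin 2)) → Set (ℤ ⊕ₗ PUnit ⊕ₗ (Fin 2 ×ₗ ℤ)) :=
  fun k => {x | c2 x = toF k}

lemma P2_partition : IsConvexPartition P2 := by
  refine ⟨?_, ?_, ?_⟩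
  · intro k
    rcases (by omega : toF k = 0 ∨ toF k = 1) with h | h
    · exact ⟨toLex (Sum.inl 0), by simp only [P2, Set.mem_setOf_eq, h]; rfl⟩
    · exact ⟨toLex (Sum.inr (toLex (Sum.inr (toLex (1, 0))))), by simp only [P2, Set.mem_setOf_eq, h]; rfl⟩
  · intro y
    refine ⟨(c2 y : Fin 2), rfl, ?_⟩
    intro k hk
    exact (hk.symm : toF k = c2 y)
  · intro k k'
    show toF k < toF k' ↔ _
    constructor
    · intro h a ha b hb
      have h0 : toF k = 0 := by omega
      have h1 : toF k' = 1 := by omega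
      simp only [P2, Set.mem_setOf_eq, h0, h1] at ha hb
      rcases b with w | (v | q)
      · exact absurd hb (by simp [c2])
      · exact absurd hb (by simp [c2])
      · rcases a with z | (u | p)
        · exact Sum.Lex.inl_lt_inr _ _
        · exact Sum.Lex.inr_lt_inr_iff.mpr (Sum.Lex.inl_lt_inr _ _)
        · refine Sum.Lex.inr_lt_inr_iff.mpr (Sum.Lex.inr_lt_inr_iff.mpr ?_)
          refine Prod.Lex.toLex_lt_toLex.mpr (.inl ?_)
          have hp : (ofLex p).1 = 0 := ha
          have hq : (ofLex q).1 = 1 := hb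
          show (ofLex p).1 < (ofLex q).1
          rw [hp, hq]
          norm_num
    · intro h
      by_contra hlt
      have h01 : toF k' ≤ toF k := not_lt.mp hlt
      rcases (by omega : toF k = 0 ∨ toF k = 1) with h0 | h0
      · have h0' : toF k' = 0 := by omega
        exact lt_irrefl _ (h (toLex (Sum.inl 0)) (by simp only [P2, Set.mem_setOf_eq, h0]; rfl)
          (toLex (Sum.inl 0)) (by simp only [P2, Set.mem_setOf_eq, h0']; rfl))
      · rcases (by omega : toF k' = 0 ∨ toF k' = 1) with h1 | h1
        · have := h (toLex (Sum.inr (toLex (Sum.inr (toLex (1, 0)))))) (by simp only [P2, Set.mem_setOf_eq, h0]; rfl)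
            (toLex (Sum.inl 0)) (by simp only [P2, Set.mem_setOf_eq, h1]; rfl)
          exact absurd this Sum.Lex.not_inr_lt_inl
        · exact lt_irrefl _ (h (toLex (Sum.inr (toLex (Sum.inr (toLex (1, 0))))))
            (by simp only [P2, Set.mem_setOf_eq, h0]; rfl)
            (toLex (Sum.inr (toLex (Sum.inr (toLex (1, 0)))))) (by simp only [P2, Set.mem_setOf_eq, h1]; rfl))

lemma f2_img (k : ↥(LinOrd.of (Fin 2))) : (f2 '' P2 k).OrdConnected := by
  rcases (by omega : toF k = 0 ∨ toF k = 1) with h | h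
  · have himg : f2 '' P2 k = Iio (toLex ((1:Fin 3), toLex (Sum.inr PUnit.unit))) := by
      ext t
      constructor
      · rintro ⟨x, hx, rfl⟩
        rcases x with z | (u | p)
        · exact Prod.Lex.toLex_lt_toLex.mpr (.inl (by norm_num))
        · exact Prod.Lex.toLex_lt_toLex.mpr (.inl (by norm_num))
        · have hp : (ofLex p).1 = 0 := by
            have h2 : c2 (Sum.inr (Sum.inr p)) = toF k := hx
            rw [h] at h2; exact h2
          show f2 _ < _
          have : f2 (Sum.inr (Sum.inr p)) = toLex ((ofLex p).1.succ, toLex (Sum.inl (ofLex p).2)) := rfl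
          rw [this, hp]
          exact Prod.Lex.toLex_lt_toLex.mpr (.inr ⟨rfl, Sum.Lex.inl_lt_inr _ _⟩)
      · intro ht
        obtain ⟨j, w⟩ := t
        replace ht := Prod.Lex.toLex_lt_toLex.mp ht
        simp only [ofLex_mk] at ht
        rcases ht with hj | ⟨hj, hw⟩
        · have hj0 : j = 0 := by omega
          subst hj0
          rcases w with z | u
          · exact ⟨Sum.inl z, (show c2 _ = toF k by rw [h]; rfl), rfl⟩
          · cases u
            exact ⟨Sum.inr (Sum.inl PUnit.unit), (show c2 _ = toF k by rw [h]; rfl), rfl⟩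
        · subst hj
          rcases w with z | u
          · refine ⟨Sum.inr (Sum.inr (toLex ((0:Fin 2), z))), (show c2 _ = toF k by rw [h]; rfl), rfl⟩
          · exact absurd (Sum.Lex.inr_lt_inr_iff.mp hw)
              (fun hh => lt_irrefl u (by cases u; exact hh))
    rw [himg]
    exact Set.ordConnected_Iio
  · have himg : f2 '' P2 k = {t | ∃ z : ℤ, t = toLex ((2:Fin 3), toLex (Sum.inl z))} := by
      ext t
      constructor
      · rintro ⟨x, hx, rfl⟩
        rcases x with z | (u | p)
        · exact absurd (show (0:Fin 2) = toF k from hx) (by rw [h]; norm_num)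
        · exact absurd (show (0:Fin 2) = toF k from hx) (by rw [h]; norm_num)
        · have hp : (ofLex p).1 = 1 := by
            have h2 : c2 (Sum.inr (Sum.inr p)) = toF k := hx
            rw [h] at h2; exact h2
          refine ⟨(ofLex p).2, ?_⟩
          show toLex ((ofLex p).1.succ, toLex (Sum.inl (ofLex p).2)) = _
          rw [hp]
          rfl
      · rintro ⟨z, rfl⟩
        exact ⟨Sum.inr (Sum.inr (toLex ((1:Fin 2), z))), (show c2 _ = toF k by rw [h]; rfl), rfl⟩
    rw [himg]
    constructor
    rintro a ⟨m, rfl⟩ b ⟨n, rfl⟩ c ⟨hac, hcb⟩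
    obtain ⟨j, w⟩ := c
    replace hac := Prod.Lex.toLex_le_toLex.mp hac
    replace hcb := Prod.Lex.toLex_le_toLex.mp hcb
    simp only [ofLex_mk] at hac hcb
    have hj : j = 2 := by
      rcases hac with h1 | ⟨h1, _⟩ <;> rcases hcb with h2 | ⟨h2, _⟩ <;> omega
    subst hj
    rcases hac with h1 | ⟨h1, hw⟩
    · omega
    rcases w with zc | u
    · exact ⟨zc, rfl⟩
    · rcases hcb with h2 | ⟨h2, hw2⟩
      · omega
      · exact absurd hw2 Sum.Lex.not_inr_le_inl

abbrev sepPt (i : Fin 3) : Fin 3 ×ₗ (ℤ ⊕ₗ PUnit) := toLex (i, toLex (Sum.inr PUnit.unit))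

lemma no_gap_above (i : Fin 3) (t : Fin 3 ×ₗ (ℤ ⊕ₗ PUnit)) (h : sepPt i < t) :
    ∃ z, sepPt i < z ∧ z < t := by
  obtain ⟨j, w⟩ := t
  replace h := Prod.Lex.toLex_lt_toLex.mp h
  simp only [ofLex_mk] at h
  have hij : i < j := by
    rcases h with h | ⟨h1, h2⟩
    · exact h
    · exfalso
      rcases w with z | u
      · exact Sum.Lex.not_inr_lt_inl h2
      · exact lt_irrefl u (by cases u; exact Sum.Lex.inr_lt_inr_iff.mp h2)
  rcases w with m | u
  · refine ⟨toLex (j, toLex (Sum.inl (m - 1))), ?_, ?_⟩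
    · exact Prod.Lex.toLex_lt_toLex.mpr (.inl hij)
    · exact Prod.Lex.toLex_lt_toLex.mpr (.inr ⟨rfl, Sum.Lex.inl_lt_inl_iff.mpr (by omega)⟩)
  · refine ⟨toLex (j, toLex (Sum.inl 0)), ?_, ?_⟩
    · exact Prod.Lex.toLex_lt_toLex.mpr (.inl hij)
    · exact Prod.Lex.toLex_lt_toLex.mpr (.inr ⟨rfl, Sum.Lex.inl_lt_inr _ _⟩)

lemma no_gap_below (i : Fin 3) (t : Fin 3 ×ₗ (ℤ ⊕ₗ PUnit)) (h : t < sepPt i) :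
    ∃ z, t < z ∧ z < sepPt i := by
  obtain ⟨j, w⟩ := t
  replace h := Prod.Lex.toLex_lt_toLex.mp h
  simp only [ofLex_mk] at h
  rcases h with h | ⟨h1, h2⟩
  · refine ⟨toLex (i, toLex (Sum.inl 0)), ?_, ?_⟩
    · exact Prod.Lex.toLex_lt_toLex.mpr (.inl h)
    · exact Prod.Lex.toLex_lt_toLex.mpr (.inr ⟨rfl, Sum.Lex.inl_lt_inr _ _⟩)
  · subst h1
    rcases w with m | u
    · refine ⟨toLex (j, toLex (Sum.inl (m + 1))), ?_, ?_⟩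
      · exact Prod.Lex.toLex_lt_toLex.mpr (.inr ⟨rfl, Sum.Lex.inl_lt_inl_iff.mpr (by omega)⟩)
      · exact Prod.Lex.toLex_lt_toLex.mpr (.inr ⟨rfl, Sum.Lex.inl_lt_inr _ _⟩)
    · exact absurd h2 (fun hh => lt_irrefl u (by cases u; exact Sum.Lex.inr_lt_inr_iff.mp hh))

lemma succ_between {i : Fin 3} {z : ℤ} {c : Fin 3 ×ₗ ℤ}
    (h1 : toLex (i, z) < c) (h2 : c < toLex (i, z + 1)) : False := by
  obtain ⟨j, w⟩ := c
  replace h1 := Prod.Lex.toLex_lt_toLex.mp h1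
  replace h2 := Prod.Lex.toLex_lt_toLex.mp h2
  simp only [ofLex_mk] at h1 h2
  rcases h1 with h1 | ⟨h1, h1'⟩ <;> rcases h2 with h2 | ⟨h2, h2'⟩ <;> omega

lemma lt_succ' (i : Fin 3) (z : ℤ) : toLex (i, z) < toLex (i, z + 1) :=
  Prod.Lex.toLex_lt_toLex.mpr (.inr ⟨rfl, by omega⟩)

lemma pred_lt' (i : Fin 3) (z : ℤ) : toLex (i, z - 1) < toLex (i, z) :=
  Prod.Lex.toLex_lt_toLex.mpr (.inr ⟨rfl, by omega⟩)

lemma piece_convex {K : Type u} {L : Type v} [LinearOrder K] [LinearOrder L]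
    {P : K → Set L} (hP : IsConvexPartition P) (k : K) :
    ∀ a ∈ P k, ∀ b ∈ P k, ∀ c, a ≤ c → c ≤ b → c ∈ P k := by
  intro a ha b hb c hac hcb
  obtain ⟨k', hk', -⟩ := hP.2.1 c
  rcases lt_trichotomy k k' with h | h | h
  · exact absurd (((hP.2.2 k k').mp h) b hb c hk') (not_lt.mpr hcb)
  · exact h ▸ hk'
  · exact absurd (((hP.2.2 k' k).mp h) c hk' a ha) (not_lt.mpr hac)

lemma no_sep_in_image (f : (Fin 3 ×ₗ ℤ) ↪o (Fin 3 ×ₗ (ℤ ⊕ₗ PUnit))) (A : Set (Fin 3 ×ₗ ℤ))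
    (hA : ∀ a ∈ A, ∀ b ∈ A, ∀ c, a ≤ c → c ≤ b → c ∈ A)
    (hS : (⇑f '' A).OrdConnected)
    {x y : Fin 3 ×ₗ ℤ} (hx : x ∈ A) (hy : y ∈ A) (hxy : x < y) :
    ∀ a ∈ A, ∀ i : Fin 3, f a ≠ sepPt i := by
  rintro a ha i hfa
  obtain ⟨i0, z0⟩ := a
  rcases le_or_gt (toLex (i0, z0)) x with hax | hxa
  · -- a has a successor in A
    have hay : toLex (i0, z0) < y := lt_of_le_of_lt hax hxy
    have ha' : toLex (i0, z0 + 1) ∈ A := by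
      rcases le_or_gt (toLex (i0, z0 + 1)) y with h1 | h1
      · exact hA _ ha _ hy _ (le_of_lt (lt_succ' i0 z0)) h1
      · exact absurd (succ_between hay h1) id
    have hlt : sepPt i < f (toLex (i0, z0 + 1)) := hfa ▸ f.lt_iff_lt.mpr (lt_succ' i0 z0)
    obtain ⟨z, hz1, hz2⟩ := no_gap_above i _ hlt
    have hzmem : z ∈ ⇑f '' A := by
      apply hS.out ⟨_, ha, hfa⟩ ⟨_, ha', rfl⟩
      exact ⟨le_of_lt hz1, le_of_lt hz2⟩
    obtain ⟨c, hc, rfl⟩ := hzmem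
    have h1 : toLex (i0, z0) < c := f.lt_iff_lt.mp (hfa ▸ hz1)
    exact succ_between h1 (f.lt_iff_lt.mp hz2)
  · -- a has a predecessor in A
    have ha' : toLex (i0, z0 - 1) ∈ A := by
      rcases le_or_gt x (toLex (i0, z0 - 1)) with h1 | h1
      · exact hA _ hx _ ha _ h1 (le_of_lt (pred_lt' i0 z0))
      · exfalso
        have : toLex (i0, z0 - 1 + 1) = toLex (i0, z0) := by norm_num
        exact succ_between h1 (this ▸ hxa)
    have hlt : f (toLex (i0, z0 - 1)) < sepPt i := hfa ▸ f.lt_iff_lt.mpr (pred_lt' i0 z0)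
    obtain ⟨z, hz1, hz2⟩ := no_gap_below i _ hlt
    have hzmem : z ∈ ⇑f '' A := by
      apply hS.out ⟨_, ha', rfl⟩ ⟨_, ha, hfa⟩
      exact ⟨le_of_lt hz1, le_of_lt hz2⟩
    obtain ⟨c, hc, rfl⟩ := hzmem
    have h2 : f c < f (toLex (i0, z0)) := hfa ▸ hz2
    have h1 : toLex (i0, z0 - 1) < c := f.lt_iff_lt.mp hz1
    have : toLex (i0, z0 - 1 + 1) = toLex (i0, z0) := by norm_num
    exact succ_between h1 (this ▸ f.lt_iff_lt.mp h2)

lemma main_contra (f : (Fin 3 ×ₗ ℤ) ↪o (Fin 3 ×ₗ (ℤ ⊕ₗ PUnit))) (A : Set (Fin 3 ×ₗ ℤ))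
    (hA : ∀ a ∈ A, ∀ b ∈ A, ∀ c, a ≤ c → c ≤ b → c ∈ A)
    (hS : (⇑f '' A).OrdConnected)
    (i j : Fin 3) (hij : i < j)
    (hi : toLex (i, (0:ℤ)) ∈ A) (hj : toLex (j, (0:ℤ)) ∈ A) : False := by
  set x : Fin 3 ×ₗ ℤ := toLex (i, (0:ℤ)) with hxdef
  set y : Fin 3 ×ₗ ℤ := toLex (j, (0:ℤ)) with hydef
  have hxy : x < y := Prod.Lex.toLex_lt_toLex.mpr (.inl hij)
  have hns := no_sep_in_image f A hA hS hi hj hxy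
  -- Icc x y is infinite
  have hIcc : (Icc x y).Infinite := by
    refine Set.infinite_of_injective_forall_mem
      (f := fun n : ℕ => (toLex (i, (n:ℤ)) : Fin 3 ×ₗ ℤ)) ?_ ?_
    · intro a b hab
      have : ((a:ℤ)) = b := congrArg (fun t => (ofLex t).2) hab
      exact_mod_cast this
    · intro n
      refine ⟨Prod.Lex.toLex_le_toLex.mpr (.inr ⟨rfl, by positivity⟩),
        Prod.Lex.toLex_le_toLex.mpr (.inl hij)⟩
  have hsub : ⇑f '' Icc x y ⊆ Icc (f x) (f y) := by
    rintro t ⟨c, hc, rfl⟩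
    exact ⟨f.monotone hc.1, f.monotone hc.2⟩
  have hinf2 : (Icc (f x) (f y)).Infinite :=
    Set.Infinite.mono hsub (Set.Infinite.image (f.injective.injOn) hIcc)
  have hIccsub : Icc (f x) (f y) ⊆ ⇑f '' A := hS.out ⟨x, hi, rfl⟩ ⟨y, hj, rfl⟩
  rcases hfx : f x with ⟨ci, wx⟩
  rcases hfy : f y with ⟨cj, wy⟩
  rcases wx with m | u
  swap
  · cases u; exact hns x hi ci (by rw [hfx]; rfl)
  rcases wy with n | u
  swap
  · cases u; exact hns y hj cj (by rw [hfy]; rfl)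
  have hcij : ci = cj := by
    by_contra hne
    have hxy' : f x < f y := f.lt_iff_lt.mpr hxy
    rw [hfx, hfy] at hxy'
    replace hxy' := Prod.Lex.toLex_lt_toLex.mp hxy'
    simp only [ofLex_mk] at hxy'
    have hlt : ci < cj := by
      rcases hxy' with h1 | ⟨h1, -⟩
      · exact h1
      · exact absurd h1 hne
    have hsep : sepPt ci ∈ Icc (f x) (f y) := by
      constructor
      · rw [hfx]
        exact Prod.Lex.toLex_le_toLex.mpr (.inr ⟨rfl, le_of_lt (Sum.Lex.inl_lt_inr _ _)⟩)
      · rw [hfy]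
        exact Prod.Lex.toLex_le_toLex.mpr (.inl hlt)
    obtain ⟨c, hc, hceq⟩ := hIccsub hsep
    exact hns c hc ci hceq
  subst hcij
  have hfin : (Icc (f x) (f y)).Finite := by
    apply Set.Finite.subset ((Set.finite_Icc m n).image
      (fun z : ℤ => (toLex (ci, toLex (Sum.inl z)) : Fin 3 ×ₗ (ℤ ⊕ₗ PUnit))))
    rintro t ⟨ht1, ht2⟩
    obtain ⟨jt, wt⟩ := t
    rw [hfx] at ht1
    rw [hfy] at ht2
    replace ht1 := Prod.Lex.toLex_le_toLex.mp ht1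
    replace ht2 := Prod.Lex.toLex_le_toLex.mp ht2
    simp only [ofLex_mk] at ht1 ht2
    have hjt : jt = ci := by
      rcases ht1 with h1 | ⟨h1, -⟩ <;> rcases ht2 with h2 | ⟨h2, -⟩ <;> omega
    subst hjt
    rcases ht1 with h1 | ⟨-, hw1⟩
    · exact absurd h1 (lt_irrefl _)
    rcases ht2 with h2 | ⟨-, hw2⟩
    · exact absurd h2 (lt_irrefl _)
    rcases wt with zt | ut
    · exact ⟨zt, ⟨Sum.Lex.inl_le_inl_iff.mp hw1, Sum.Lex.inl_le_inl_iff.mp hw2⟩, rfl⟩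
    · exact absurd hw2 Sum.Lex.not_inr_le_inl
  exact hinf2 hfin

theorem stmt_4 :
    LCE {A : LinOrd.{0} | Nonempty ↥A ∧ Nonempty (↥A ↪ Fin 2)}
        (Fin 3 ×ₗ ℤ) (ℤ ⊕ₗ PUnit ⊕ₗ (Fin 2 ×ₗ ℤ)) ∧
      LCE {A : LinOrd.{0} | Nonempty ↥A ∧ Nonempty (↥A ↪ Fin 2)}
        (ℤ ⊕ₗ PUnit ⊕ₗ (Fin 2 ×ₗ ℤ)) (Fin 3 ×ₗ (ℤ ⊕ₗ PUnit)) ∧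
      ¬ LCE {A : LinOrd.{0} | Nonempty ↥A ∧ Nonempty (↥A ↪ Fin 2)}
        (Fin 3 ×ₗ ℤ) (Fin 3 ×ₗ (ℤ ⊕ₗ PUnit)) := by
  refine ⟨?_, ?_, ?_⟩
  · exact ⟨LinOrd.of (Fin 2), ⟨⟨(0 : Fin 2)⟩, ⟨Function.Embedding.refl _⟩⟩, P1, P1_partition,
      OrderEmbedding.ofStrictMono f1 f1_mono, fun k => f1_img k⟩
  · exact ⟨LinOrd.of (Fin 2), ⟨⟨(0 : Fin 2)⟩, ⟨Function.Embedding.refl _⟩⟩, P2, P2_partition,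
      OrderEmbedding.ofStrictMono f2 f2_mono, fun k => f2_img k⟩
  · rintro ⟨K, ⟨hne, ⟨e⟩⟩, P, hP, f, himg⟩
    obtain ⟨k0, hk0, -⟩ := hP.2.1 (toLex ((0 : Fin 3), (0 : ℤ)))
    obtain ⟨k1, hk1, -⟩ := hP.2.1 (toLex ((1 : Fin 3), (0 : ℤ)))
    obtain ⟨k2, hk2, -⟩ := hP.2.1 (toLex ((2 : Fin 3), (0 : ℤ)))
    have htri : e k0 = e k1 ∨ e k0 = e k2 ∨ e k1 = e k2 := by omega
    rcases htri with h | h | h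
    · have heq : k0 = k1 := e.injective h
      exact main_contra f (P k0) (piece_convex hP k0) (himg k0) 0 1 (by decide)
        hk0 (heq ▸ hk1)
    · have heq : k0 = k2 := e.injective h
      exact main_contra f (P k0) (piece_convex hP k0) (himg k0) 0 2 (by decide)
        hk0 (heq ▸ hk2)
    · have heq : k1 = k2 := e.injective h
      exact main_contra f (P k1) (piece_convex hP k1) (himg k1) 1 2 (by decide)
        hk1 (heq ▸ hk2)
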